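/- arXiv:1302.3235 — 2 statements merged into one kernel-verified Lean document; each statement's English description precedes it below -/
import Mathlib

section
/- Let Z ∈ ℂⁿˣⁿ be nonsingular with polar decomposition Z = U_p H (U_p unitary, H Hermitian positive definite). Then for the spectral norm, min over Q ∈ U(n) and over all matrix logarithms X with exp X = Q* Z of ‖X‖₂ equals ‖log H‖₂ = max(|log σ₁(Z)|, |log σₙ(Z)|), attained at Q = U_p with X the principal logarithm. -/
open Matrix
open scoped ComplexOrder
set_option maxHeartbeats 1000000
set_option synthInstance.maxHeartbeats 400000

/-- Spectral norm (largest singular value) of a complex matrix. -/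
noncomputable def specNorm {m : ℕ} (X : Matrix (Fin m) (Fin m) ℂ) : ℝ :=
  ‖Matrix.toEuclideanCLM (𝕜 := ℂ) X‖

section Aux

open scoped Matrix.Norms.L2Operator
open NormedSpace

/-- `‖exp x‖ ≤ exp ‖x‖` in a complex Banach algebra. -/
lemma aux_norm_exp_le {𝔸 : Type*} [NormedRing 𝔸] [NormedAlgebra ℂ 𝔸] [CompleteSpace 𝔸]
    [NormOneClass 𝔸] (x : 𝔸) : ‖exp x‖ ≤ Real.exp ‖x‖ := by
  rw [exp_eq_tsum (𝕂 := ℂ)]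
  refine (norm_tsum_le_tsum_norm (norm_expSeries_summable' (𝕂 := ℂ) x)).trans ?_
  rw [Real.exp_eq_exp_ℝ, exp_eq_tsum (𝕂 := ℝ)]
  refine Summable.tsum_le_tsum (fun n => ?_) (norm_expSeries_summable' (𝕂 := ℂ) x)
    (expSeries_summable' (𝕂 := ℝ) ‖x‖)
  rw [norm_smul, norm_inv, RCLike.norm_natCast, smul_eq_mul]
  have h1 : ‖x ^ n‖ ≤ ‖x‖ ^ n := by
    cases n with
    | zero => simp
    | succ k => exact norm_pow_le' x k.succ_pos
  exact mul_le_mul_of_nonneg_left h1 (by positivity)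

noncomputable local instance matCStar (N : ℕ) : CStarAlgebra (Matrix (Fin N) (Fin N) ℂ) := { }

variable {N : ℕ}

/-- conjugation by a unitary preserves the spectrum. -/
lemma aux_spec_conj (V D : Matrix (Fin N) (Fin N) ℂ)
    (hV : V ∈ Matrix.unitaryGroup (Fin N) ℂ) :
    spectrum ℂ (V * D * star V) = spectrum ℂ D := by
  let u : (Matrix (Fin N) (Fin N) ℂ)ˣ :=
    ⟨V, star V, mem_unitaryGroup_iff.mp hV, mem_unitaryGroup_iff'.mp hV⟩
  have : V * D * star V = (↑u : Matrix (Fin N) (Fin N) ℂ) * D * (↑u⁻¹ : Matrix (Fin N) (Fin N) ℂ) := rfl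
  rw [this, spectrum.units_conjugate]

lemma aux_sa_norm_le (a : Matrix (Fin (N + 1)) (Fin (N + 1)) ℂ) (ha : IsSelfAdjoint a) {C : ℝ}
    (hC : 0 ≤ C) (h : ∀ k ∈ spectrum ℂ a, ‖k‖ ≤ C) : ‖a‖ ≤ C := by
  have hrad : spectralRadius ℂ a = ‖a‖₊ := ha.spectralRadius_eq_nnnorm
  have hle : spectralRadius ℂ a ≤ ENNReal.ofReal C := by
    unfold spectralRadius
    refine iSup₂_le fun k hk => ?_
    rw [← ENNReal.ofReal_coe_nnreal, coe_nnnorm]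
    exact ENNReal.ofReal_le_ofReal (h k hk)
  rw [hrad] at hle
  have := ENNReal.toReal_mono ENNReal.ofReal_ne_top hle
  simpa [hC] using this

theorem aux_main (n : ℕ) (Z Up H L : Matrix (Fin (n + 1)) (Fin (n + 1)) ℂ)
    (hZ : IsUnit Z.det)
    (hUp : Up ∈ Matrix.unitaryGroup (Fin (n + 1)) ℂ)
    (hH : H.PosDef) (hpolar : Z = Up * H)
    (hL : L.IsHermitian) (hexpL : NormedSpace.exp L = H)
    (σ : Fin (n + 1) → ℝ) (hσ : Antitone σ) (hσpos : ∀ i, 0 < σ i)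
    (V : Matrix (Fin (n + 1)) (Fin (n + 1)) ℂ)
    (hV : V ∈ Matrix.unitaryGroup (Fin (n + 1)) ℂ)
    (hdiag : H = V * Matrix.diagonal (fun i => (σ i : ℂ)) * Vᴴ) :
    IsLeast {r : ℝ | ∃ Q ∈ Matrix.unitaryGroup (Fin (n + 1)) ℂ,
        ∃ X : Matrix (Fin (n + 1)) (Fin (n + 1)) ℂ,
          NormedSpace.exp X = Qᴴ * Z ∧ r = specNorm X} (specNorm L) ∧
    specNorm L = max |Real.log (σ 0)| |Real.log (σ (Fin.last n))| := by
  have hsn : ∀ X : Matrix (Fin (n + 1)) (Fin (n + 1)) ℂ, specNorm X = ‖X‖ := fun _ => rfl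
  set la := Real.log (σ 0) with hla
  set lb := Real.log (σ (Fin.last n)) with hlb
  have hlable : lb ≤ la := by
    rw [hla, hlb]
    exact Real.log_le_log (hσpos _) (hσ (Fin.zero_le _))
  have hCmax : max |la| |lb| = max la (-lb) := by
    rw [abs_eq_max_neg, abs_eq_max_neg, max_max_max_comm, max_eq_left hlable,
      max_eq_right (neg_le_neg hlable)]
  -- spectra
  have hstarV : Vᴴ = star V := rfl
  have hHspec : spectrum ℂ H = Set.range (fun i => (σ i : ℂ)) := by
    rw [hdiag, hstarV, aux_spec_conj V _ hV, spectrum_diagonal]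
  -- the inverse of H
  set Hi : Matrix (Fin (n + 1)) (Fin (n + 1)) ℂ :=
    V * Matrix.diagonal (fun i => ((σ i : ℂ))⁻¹) * Vᴴ with hHi
  have hDD : Matrix.diagonal (fun i => (σ i : ℂ)) * Matrix.diagonal (fun i => ((σ i : ℂ))⁻¹)
      = 1 := by
    rw [Matrix.diagonal_mul_diagonal]
    convert Matrix.diagonal_one
    exact mul_inv_cancel₀ (Complex.ofReal_ne_zero.mpr (hσpos _).ne')
  have hDD' : Matrix.diagonal (fun i => ((σ i : ℂ))⁻¹) * Matrix.diagonal (fun i => (σ i : ℂ))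
      = 1 := by
    rw [Matrix.diagonal_mul_diagonal]
    convert Matrix.diagonal_one
    exact inv_mul_cancel₀ (Complex.ofReal_ne_zero.mpr (hσpos _).ne')
  have hVV : Vᴴ * V = 1 := by rw [hstarV]; exact mem_unitaryGroup_iff'.mp hV
  have hHHi : H * Hi = 1 := by
    rw [hdiag, hHi]
    simp only [Matrix.mul_assoc]
    rw [← Matrix.mul_assoc Vᴴ V, hVV, one_mul, ← Matrix.mul_assoc _ (Matrix.diagonal _) Vᴴ,
      hDD, one_mul, hstarV, mem_unitaryGroup_iff.mp hV]
  have hHispec : spectrum ℂ Hi = Set.range (fun i => ((σ i : ℂ))⁻¹) := by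
    rw [hHi, hstarV, aux_spec_conj V _ hV, spectrum_diagonal]
  -- norm lower bounds from the spectrum
  have hnormH : σ 0 ≤ ‖H‖ := by
    have hmem : ((σ 0 : ℂ)) ∈ spectrum ℂ H := by rw [hHspec]; exact ⟨0, rfl⟩
    have := spectrum.norm_le_norm_of_mem hmem
    rwa [Complex.norm_real, Real.norm_eq_abs, abs_of_pos (hσpos 0)] at this
  have hnormHi : (σ (Fin.last n))⁻¹ ≤ ‖Hi‖ := by
    have hmem : ((σ (Fin.last n) : ℂ))⁻¹ ∈ spectrum ℂ Hi := by
      rw [hHispec]; exact ⟨Fin.last n, rfl⟩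
    have := spectrum.norm_le_norm_of_mem hmem
    rwa [norm_inv, Complex.norm_real, Real.norm_eq_abs,
      abs_of_pos (hσpos (Fin.last n))] at this
  -- the key lower bound
  have key : ∀ Q ∈ Matrix.unitaryGroup (Fin (n + 1)) ℂ,
      ∀ X : Matrix (Fin (n + 1)) (Fin (n + 1)) ℂ,
      NormedSpace.exp X = Qᴴ * Z → max la (-lb) ≤ ‖X‖ := by
    intro Q hQ X hX
    have hQs : Qᴴ = star Q := rfl
    have hUps : Upᴴ = star Up := rfl
    have h1 : la ≤ ‖X‖ := by
      have hne : ‖NormedSpace.exp X‖ = ‖H‖ := by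
        rw [hX, hpolar, hQs, ← Matrix.mul_assoc]
        exact CStarRing.norm_mem_unitary_mul H (mul_mem (Unitary.star_mem hQ) hUp)
      have hle : σ 0 ≤ Real.exp ‖X‖ := by
        calc σ 0 ≤ ‖H‖ := hnormH
          _ = ‖NormedSpace.exp X‖ := hne.symm
          _ ≤ Real.exp ‖X‖ := aux_norm_exp_le X
      rw [hla, Real.log_le_iff_le_exp (hσpos 0)]
      exact hle
    have h2 : -lb ≤ ‖X‖ := by
      have e1 : NormedSpace.exp (-X) * NormedSpace.exp X = 1 := by
        rw [← Matrix.exp_add_of_commute (-X) X (Commute.refl X).neg_left, neg_add_cancel,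
          NormedSpace.exp_zero]
      have e2 : NormedSpace.exp X * (Hi * (Upᴴ * Q)) = 1 := by
        rw [hX, hpolar, hQs, hUps]
        simp only [Matrix.mul_assoc]
        rw [← Matrix.mul_assoc H Hi, hHHi, one_mul, ← Matrix.mul_assoc Up (star Up),
          mem_unitaryGroup_iff.mp hUp, one_mul, mem_unitaryGroup_iff'.mp hQ]
      have hXinv : NormedSpace.exp (-X) = Hi * (Upᴴ * Q) := left_inv_eq_right_inv e1 e2
      have hne : ‖NormedSpace.exp (-X)‖ = ‖Hi‖ := by
        rw [hXinv, hUps]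
        exact CStarRing.norm_mul_mem_unitary Hi (mul_mem (Unitary.star_mem hUp) hQ)
      have hle : (σ (Fin.last n))⁻¹ ≤ Real.exp ‖X‖ := by
        calc (σ (Fin.last n))⁻¹ ≤ ‖Hi‖ := hnormHi
          _ = ‖NormedSpace.exp (-X)‖ := hne.symm
          _ ≤ Real.exp ‖-X‖ := aux_norm_exp_le (-X)
          _ = Real.exp ‖X‖ := by rw [norm_neg]
      have := (Real.log_le_iff_le_exp (inv_pos.mpr (hσpos _))).mpr hle
      rw [Real.log_inv] at this
      exact this
    exact max_le h1 h2
  -- spectrum of L via the spectral theorem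
  have hWmem : (hL.eigenvectorUnitary : Matrix (Fin (n + 1)) (Fin (n + 1)) ℂ)
      ∈ Matrix.unitaryGroup (Fin (n + 1)) ℂ := hL.eigenvectorUnitary.2
  set W : Matrix (Fin (n + 1)) (Fin (n + 1)) ℂ := ↑(hL.eigenvectorUnitary) with hW
  set μ : Fin (n + 1) → ℝ := hL.eigenvalues with hμdef
  have hst : L = W * Matrix.diagonal (RCLike.ofReal ∘ μ) * star W := hL.spectral_theorem
  have hLspec : spectrum ℂ L = Set.range (fun i => (μ i : ℂ)) := by
    conv_lhs => rw [hst]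
    rw [aux_spec_conj _ _ hWmem, spectrum_diagonal]
    rfl
  set uW : (Matrix (Fin (n + 1)) (Fin (n + 1)) ℂ)ˣ :=
    ⟨W, star W, mem_unitaryGroup_iff.mp hWmem, mem_unitaryGroup_iff'.mp hWmem⟩ with huW
  have hexp2 : NormedSpace.exp L
      = W * Matrix.diagonal (fun i => (Real.exp (μ i) : ℂ)) * star W := by
    conv_lhs => rw [hst]
    have hconj := Matrix.exp_units_conj uW (Matrix.diagonal (RCLike.ofReal ∘ μ))
    have hrw : W * Matrix.diagonal (RCLike.ofReal ∘ μ) * star W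
        = (↑uW : Matrix (Fin (n + 1)) (Fin (n + 1)) ℂ) * Matrix.diagonal (RCLike.ofReal ∘ μ)
          * (↑uW⁻¹ : Matrix (Fin (n + 1)) (Fin (n + 1)) ℂ) := rfl
    have hfun : (NormedSpace.exp (RCLike.ofReal ∘ μ) : Fin (n + 1) → ℂ)
        = fun i => (Real.exp (μ i) : ℂ) := by
      funext i
      rw [Pi.exp_def]
      show NormedSpace.exp ((μ i : ℂ)) = (Real.exp (μ i) : ℂ)
      rw [← Complex.exp_eq_exp_ℂ, Complex.ofReal_exp]
    rw [hrw, hconj, Matrix.exp_diagonal, hfun]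
    rfl
  have hrange : Set.range (fun i => (Real.exp (μ i) : ℂ)) = Set.range (fun i => (σ i : ℂ)) := by
    rw [← spectrum_diagonal (R := ℂ) (fun i => (Real.exp (μ i) : ℂ)),
      ← aux_spec_conj _ _ hWmem, ← hexp2, hexpL, hHspec]
  have hμb : ∀ i, lb ≤ μ i ∧ μ i ≤ la := by
    intro i
    obtain ⟨j, hj⟩ : ((Real.exp (μ i) : ℂ)) ∈ Set.range (fun i => (σ i : ℂ)) := by
      rw [← hrange]; exact ⟨i, rfl⟩
    have hj2 : ((σ j : ℝ) : ℂ) = ((Real.exp (μ i) : ℝ) : ℂ) := hj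
    have hj' : σ j = Real.exp (μ i) := by exact_mod_cast hj2
    have hμi : μ i = Real.log (σ j) := by rw [hj', Real.log_exp]
    constructor
    · rw [hμi, hlb]; exact Real.log_le_log (hσpos _) (hσ (Fin.le_last j))
    · rw [hμi, hla]; exact Real.log_le_log (hσpos _) (hσ (Fin.zero_le j))
  have hLsa : IsSelfAdjoint L := hL
  have hC0 : (0 : ℝ) ≤ max la (-lb) := by
    rw [← hCmax]; positivity
  have hnormL : ‖L‖ ≤ max la (-lb) := by
    refine aux_sa_norm_le L hLsa hC0 fun k hk => ?_
    rw [hLspec] at hk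
    obtain ⟨i, rfl⟩ := hk
    rw [Complex.norm_real, Real.norm_eq_abs]
    have h1 := (hμb i).1
    have h2 := (hμb i).2
    have h3 : la ≤ max la (-lb) := le_max_left _ _
    have h4 : -lb ≤ max la (-lb) := le_max_right _ _
    rcases abs_cases (μ i) with ⟨he, _⟩ | ⟨he, _⟩ <;> rw [he] <;> linarith
  have hmemL : NormedSpace.exp L = Upᴴ * Z := by
    rw [hexpL, hpolar, ← Matrix.mul_assoc,
      show Upᴴ = star Up from rfl, mem_unitaryGroup_iff'.mp hUp, one_mul]
  have hGe : max la (-lb) ≤ ‖L‖ := key Up hUp L hmemL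
  have hEq : ‖L‖ = max la (-lb) := le_antisymm hnormL hGe
  constructor
  · constructor
    · exact ⟨Up, hUp, L, hmemL, rfl⟩
    · rintro r ⟨Q, hQ, X, hX, rfl⟩
      rw [hsn L, hsn X, hEq]
      exact key Q hQ X hX
  · rw [hsn L, hEq, hCmax]

end Aux

/-- For nonsingular `Z = U_p H` (polar decomposition) the minimum of `‖X‖₂` over unitary `Q`
and all logarithms `X` of `Q* Z` is `‖log H‖₂ = max (|log σ₁|, |log σₙ|)`, attained at
`Q = U_p` with `X = log H` the principal (Hermitian) logarithm. -/
theorem min_specNorm_log (n : ℕ) (Z Up H L : Matrix (Fin (n + 1)) (Fin (n + 1)) ℂ)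
    (hZ : IsUnit Z.det)
    (hUp : Up ∈ Matrix.unitaryGroup (Fin (n + 1)) ℂ)
    (hH : H.PosDef) (hpolar : Z = Up * H)
    (hL : L.IsHermitian) (hexpL : NormedSpace.exp L = H)
    (σ : Fin (n + 1) → ℝ) (hσ : Antitone σ) (hσpos : ∀ i, 0 < σ i)
    (V : Matrix (Fin (n + 1)) (Fin (n + 1)) ℂ)
    (hV : V ∈ Matrix.unitaryGroup (Fin (n + 1)) ℂ)
    (hdiag : H = V * Matrix.diagonal (fun i => (σ i : ℂ)) * Vᴴ) :
    IsLeast {r : ℝ | ∃ Q ∈ Matrix.unitaryGroup (Fin (n + 1)) ℂ,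
        ∃ X : Matrix (Fin (n + 1)) (Fin (n + 1)) ℂ,
          NormedSpace.exp X = Qᴴ * Z ∧ r = specNorm X} (specNorm L) ∧
    specNorm L = max |Real.log (σ 0)| |Real.log (σ (Fin.last n))| := by
  exact aux_main n Z Up H L hZ hUp hH hpolar hL hexpL σ hσ hσpos V hV hdiag
end

section
/- Let Z ∈ ℂⁿˣⁿ be nonsingular with polar decomposition Z = U_p H. Then for the spectral norm, min over Q ∈ U(n) and all logarithms X with exp X = Q* Z of ‖sym X‖₂ equals ‖log H‖₂. -/
open Matrix
open scoped ComplexOrder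

open NormedSpace
open scoped InnerProductSpace

section Helpers

variable {Eu : Type*} [NormedAddCommGroup Eu] [InnerProductSpace ℂ Eu] [CompleteSpace Eu]

/-- Pointwise bound: the real part of ⟪A w, w⟫ is bounded by the norm of the symmetric part. -/
lemma re_inner_le_sym_norm (A : Eu →L[ℂ] Eu) (w : Eu) :
    (⟪A w, w⟫_ℂ).re ≤ ‖(1/2 : ℂ) • (A + star A)‖ * ‖w‖ ^ 2 := by
  set S := (1/2 : ℂ) • (A + star A) with hS
  have hstar : (star A) w = ContinuousLinearMap.adjoint A w := by
    rw [ContinuousLinearMap.star_eq_adjoint]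
  have hkey : (⟪S w, w⟫_ℂ).re = (⟪A w, w⟫_ℂ).re := by
    have h1 : ⟪(star A) w, w⟫_ℂ = ⟪w, A w⟫_ℂ := by
      rw [hstar, ContinuousLinearMap.adjoint_inner_left]
    have h2 : ⟪S w, w⟫_ℂ = (1/2 : ℂ) * (⟪A w, w⟫_ℂ + ⟪w, A w⟫_ℂ) := by
      rw [hS]
      simp only [ContinuousLinearMap.smul_apply, ContinuousLinearMap.add_apply,
        inner_smul_left, inner_add_left, h1]
      rw [show ((starRingEnd ℂ) (1/2 : ℂ)) = (1/2 : ℂ) by simp [Complex.ext_iff]]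
      try ring
    have h3 : (⟪w, A w⟫_ℂ).re = (⟪A w, w⟫_ℂ).re := by
      rw [← inner_conj_symm (A w) w, Complex.conj_re]
    rw [h2]
    simp [Complex.add_re, h3]
    ring
  calc (⟪A w, w⟫_ℂ).re = (⟪S w, w⟫_ℂ).re := hkey.symm
    _ ≤ ‖⟪S w, w⟫_ℂ‖ := Complex.re_le_norm _
    _ = ‖⟪S w, w⟫_ℂ‖ := rfl
    _ ≤ ‖S w‖ * ‖w‖ := norm_inner_le_norm _ _
    _ ≤ (‖S‖ * ‖w‖) * ‖w‖ := by
        have := S.le_opNorm w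
        have h0 : (0:ℝ) ≤ ‖w‖ := norm_nonneg _
        nlinarith [norm_nonneg (S w)]
    _ = ‖S‖ * ‖w‖ ^ 2 := by ring

/-- Operator norm bound: `‖exp A‖ ≤ exp ‖sym A‖`. -/
lemma norm_exp_le_exp_norm_sym (A : Eu →L[ℂ] Eu) :
    ‖exp A‖ ≤ Real.exp ‖(1/2 : ℂ) • (A + star A)‖ := by
  set K := ‖(1/2 : ℂ) • (A + star A)‖ with hK
  have hK0 : 0 ≤ K := norm_nonneg _
  refine ContinuousLinearMap.opNorm_le_bound _ (Real.exp_nonneg K) (fun v => ?_)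
  -- the flow `G t = exp (t • A) v`
  set G : ℝ → Eu := fun t => (exp (t • A)) v with hG
  have hGderiv : ∀ t : ℝ, HasDerivAt G (A (G t)) t := by
    intro t
    have h1 : HasDerivAt (fun u : ℝ => exp (u • A)) (A * exp (t • A)) t :=
      hasDerivAt_exp_smul_const' (𝕂 := ℝ) A t
    have h2 := (((ContinuousLinearMap.apply ℂ Eu v).restrictScalars
      ℝ).hasFDerivAt.comp_hasDerivAt t h1)
    exact h2
  -- the squared norm function
  set f : ℝ → ℝ := fun t => (⟪G t, G t⟫_ℂ).re with hf
  have hfnonneg : ∀ t, f t = ‖G t‖ ^ 2 := fun t =>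
    inner_self_eq_norm_sq (𝕜 := ℂ) (G t)
  have hfderiv : ∀ t : ℝ, HasDerivAt f (2 * (⟪A (G t), G t⟫_ℂ).re) t := by
    intro t
    have h1 : HasDerivAt (fun s => ⟪G s, G s⟫_ℂ)
        (⟪G t, A (G t)⟫_ℂ + ⟪A (G t), G t⟫_ℂ) t :=
      (hGderiv t).inner ℂ (hGderiv t)
    have h2 := (Complex.reCLM.hasFDerivAt.comp_hasDerivAt t h1)
    have h3 : (⟪G t, A (G t)⟫_ℂ + ⟪A (G t), G t⟫_ℂ).re
        = 2 * (⟪A (G t), G t⟫_ℂ).re := by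
      rw [Complex.add_re, ← inner_conj_symm (A (G t)) (G t), Complex.conj_re]
      ring
    rw [← h3]; exact h2
  -- the damped function is antitone
  set F : ℝ → ℝ := fun t => Real.exp (-(2 * K) * t) * f t with hF
  have hFderiv : ∀ t : ℝ, HasDerivAt F
      (Real.exp (-(2 * K) * t) * (-(2 * K) * 1) * f t +
        Real.exp (-(2 * K) * t) * (2 * (⟪A (G t), G t⟫_ℂ).re)) t := by
    intro t
    have he : HasDerivAt (fun u : ℝ => Real.exp (-(2 * K) * u))
        (Real.exp (-(2 * K) * t) * (-(2 * K) * 1)) t :=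
      ((hasDerivAt_id t).const_mul (-(2 * K))).exp
    exact he.mul (hfderiv t)
  have hFanti : Antitone F := by
    refine antitone_of_deriv_nonpos (fun t => (hFderiv t).differentiableAt) (fun t => ?_)
    rw [(hFderiv t).deriv]
    have hb : (⟪A (G t), G t⟫_ℂ).re ≤ K * ‖G t‖ ^ 2 := re_inner_le_sym_norm A (G t)
    have h5 : Real.exp (-(2 * K) * t) * (⟪A (G t), G t⟫_ℂ).re ≤
        Real.exp (-(2 * K) * t) * (K * ‖G t‖ ^ 2) :=
      mul_le_mul_of_nonneg_left hb (Real.exp_pos _).le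
    have hfeq := hfnonneg t
    have hrw : Real.exp (-(2 * K) * t) * (-(2 * K) * 1) * f t +
        Real.exp (-(2 * K) * t) * (2 * (⟪A (G t), G t⟫_ℂ).re) =
        -(2 * (Real.exp (-(2 * K) * t) * (K * ‖G t‖ ^ 2))) +
        2 * (Real.exp (-(2 * K) * t) * (⟪A (G t), G t⟫_ℂ).re) := by
      rw [hfeq]; ring
    rw [hrw]
    linarith [h5]
  have h01 := hFanti (by norm_num : (0:ℝ) ≤ 1)
  have hG0 : G 0 = v := by simp [hG]
  have hG1 : G 1 = (exp A) v := by
    simp [hG]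
  have hF0 : F 0 = ‖v‖ ^ 2 := by simp [hF, hfnonneg 0, hG0]
  have hF1 : F 1 = Real.exp (-(2 * K)) * ‖(exp A) v‖ ^ 2 := by
    simp [hF, hfnonneg 1, hG1]
  rw [hF1, hF0] at h01
  have key : ‖(exp A) v‖ ^ 2 ≤ (Real.exp K * ‖v‖) ^ 2 := by
    have h2 := Real.exp_pos (-(2 * K))
    have h3 : Real.exp (2 * K) * Real.exp (-(2 * K)) = 1 := by
      rw [← Real.exp_add]; simp
    have h4 : ‖(exp A) v‖ ^ 2 ≤ Real.exp (2 * K) * ‖v‖ ^ 2 := by nlinarith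
    have h6 : (Real.exp K * ‖v‖) ^ 2 = Real.exp (2 * K) * ‖v‖ ^ 2 := by
      rw [mul_pow, sq (Real.exp K), ← Real.exp_add]; ring_nf
    linarith [h6 ▸ h4]
  exact (pow_le_pow_iff_left₀ (norm_nonneg _)
    (by positivity) two_ne_zero).mp key

/-- A coisometry-isometry (unitary) preserves norms pointwise. -/
lemma unitary_norm_apply {U : Eu →L[ℂ] Eu} (hU : star U * U = 1) (v : Eu) :
    ‖U v‖ = ‖v‖ := by
  have h1 : ⟪U v, U v⟫_ℂ = ⟪v, v⟫_ℂ := by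
    have h2 : (star U) (U v) = v := by
      have : (star U * U) v = v := by rw [hU]; simp
      simpa using this
    calc ⟪U v, U v⟫_ℂ = ⟪ContinuousLinearMap.adjoint U (U v), v⟫_ℂ := by
          rw [ContinuousLinearMap.adjoint_inner_left]
      _ = ⟪v, v⟫_ℂ := by rw [← ContinuousLinearMap.star_eq_adjoint, h2]
  have h3 : ‖U v‖ ^ 2 = ‖v‖ ^ 2 := by
    rw [← inner_self_eq_norm_sq (𝕜 := ℂ), ← inner_self_eq_norm_sq (𝕜 := ℂ), h1]
  have := norm_nonneg (U v); have := norm_nonneg v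
  nlinarith

lemma norm_unitary_mul {U : Eu →L[ℂ] Eu} (hU : star U * U = 1) (hU' : U * star U = 1)
    (B : Eu →L[ℂ] Eu) : ‖U * B‖ = ‖B‖ := by
  refine le_antisymm ?_ ?_
  · refine ContinuousLinearMap.opNorm_le_bound _ (norm_nonneg B) (fun v => ?_)
    calc ‖(U * B) v‖ = ‖U (B v)‖ := rfl
      _ = ‖B v‖ := unitary_norm_apply hU _
      _ ≤ ‖B‖ * ‖v‖ := B.le_opNorm v
  · refine ContinuousLinearMap.opNorm_le_bound _ (norm_nonneg _) (fun v => ?_)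
    calc ‖B v‖ = ‖U (B v)‖ := (unitary_norm_apply hU _).symm
      _ = ‖(U * B) v‖ := rfl
      _ ≤ ‖U * B‖ * ‖v‖ := (U * B).le_opNorm v

lemma norm_mul_unitary {U : Eu →L[ℂ] Eu} (hU : star U * U = 1) (hU' : U * star U = 1)
    (B : Eu →L[ℂ] Eu) : ‖B * U‖ = ‖B‖ := by
  have hsU : star (star U) * (star U) = 1 := by
    rw [star_star]; exact hU'
  refine le_antisymm ?_ ?_
  · refine ContinuousLinearMap.opNorm_le_bound _ (norm_nonneg B) (fun v => ?_)
    calc ‖(B * U) v‖ = ‖B (U v)‖ := rfl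
      _ ≤ ‖B‖ * ‖U v‖ := B.le_opNorm _
      _ = ‖B‖ * ‖v‖ := by rw [unitary_norm_apply hU v]
  · refine ContinuousLinearMap.opNorm_le_bound _ (norm_nonneg _) (fun v => ?_)
    have hv : U ((star U) v) = v := by
      have : (U * star U) v = v := by rw [hU']; simp
      simpa using this
    calc ‖B v‖ = ‖B (U ((star U) v))‖ := by rw [hv]
      _ = ‖(B * U) ((star U) v)‖ := rfl
      _ ≤ ‖B * U‖ * ‖(star U) v‖ := (B * U).le_opNorm _
      _ = ‖B * U‖ * ‖v‖ := by rw [unitary_norm_apply hsU v]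

/-- For a selfadjoint operator on a nontrivial space,
`exp ‖T‖ ≤ max ‖exp T‖ ‖exp (-T)‖`. -/
lemma exp_norm_le_max [Nontrivial Eu] {T : Eu →L[ℂ] Eu} (hT : IsSelfAdjoint T) :
    Real.exp ‖T‖ ≤ max ‖exp T‖ ‖exp (-T)‖ := by
  obtain ⟨z, hz, hznorm⟩ := spectrum.exists_nnnorm_eq_spectralRadius (a := T)
  have hrad : spectralRadius ℂ T = ‖T‖₊ := hT.spectralRadius_eq_nnnorm
  have hzn : ‖z‖ = ‖T‖ := by
    have h := hznorm.trans hrad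
    exact_mod_cast congrArg ENNReal.toReal h
  have hzre : z = z.re := hT.mem_spectrum_eq_re hz
  have habs : |z.re| = ‖T‖ := by
    rw [← hzn]
    conv_rhs => rw [hzre]
    rw [Complex.norm_real, Real.norm_eq_abs]
  rcases le_or_gt 0 z.re with hre | hre
  · have hmem : exp z ∈ spectrum ℂ (exp T) := spectrum.exp_mem_exp T hz
    have h1 : ‖exp z‖ ≤ ‖exp T‖ := spectrum.norm_le_norm_of_mem hmem
    have h2 : ‖exp z‖ = Real.exp z.re := by
      rw [← Complex.exp_eq_exp_ℂ, Complex.norm_exp]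
    have h3 : Real.exp ‖T‖ = Real.exp z.re := by rw [← habs, abs_of_nonneg hre]
    refine le_max_of_le_left ?_
    rw [h3, ← h2]; exact h1
  · have hmemneg : -z ∈ spectrum ℂ (-T) := by
      rw [← spectrum.neg_eq]; exact Set.neg_mem_neg.mpr hz
    have hmem : exp (-z) ∈ spectrum ℂ (exp (-T)) := spectrum.exp_mem_exp (-T) hmemneg
    have h1 : ‖exp (-z)‖ ≤ ‖exp (-T)‖ := spectrum.norm_le_norm_of_mem hmem
    have h2 : ‖exp (-z)‖ = Real.exp (-z.re) := by
      rw [← Complex.exp_eq_exp_ℂ, Complex.norm_exp, Complex.neg_re]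
    have h3 : Real.exp ‖T‖ = Real.exp (-z.re) := by rw [← habs, abs_of_neg hre]
    refine le_max_of_le_right ?_
    rw [h3, ← h2]; exact h1

end Helpers

open scoped Matrix.Norms.L2Operator

set_option maxHeartbeats 1000000 in
/-- For nonsingular `Z = U_p H`, the minimum of `‖sym X‖₂` over unitary `Q` and all
logarithms `X` of `Q* Z` equals `‖log H‖₂`. -/
theorem min_specNorm_sym_log (n : ℕ) (Z Up H L : Matrix (Fin n) (Fin n) ℂ)
    (hZ : IsUnit Z.det)
    (hUp : Up ∈ Matrix.unitaryGroup (Fin n) ℂ)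
    (hH : H.PosDef) (hpolar : Z = Up * H)
    (hL : L.IsHermitian) (hexpL : NormedSpace.exp L = H) :
    IsLeast {r : ℝ | ∃ Q ∈ Matrix.unitaryGroup (Fin n) ℂ,
        ∃ X : Matrix (Fin n) (Fin n) ℂ,
          NormedSpace.exp X = Qᴴ * Z ∧ r = specNorm ((1 / 2 : ℂ) • (X + Xᴴ))}
      (specNorm L) := by
  have hUp1 : Upᴴ * Up = 1 := by
    have := (Unitary.mem_iff.mp hUp).1
    simpa [Matrix.star_eq_conjTranspose] using this
  have hUp2 : Up * Upᴴ = 1 := by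
    have := (Unitary.mem_iff.mp hUp).2
    simpa [Matrix.star_eq_conjTranspose] using this
  constructor
  · -- membership : take Q = Up, X = L
    refine ⟨Up, hUp, L, ?_, ?_⟩
    · rw [hpolar, ← Matrix.mul_assoc, hUp1, Matrix.one_mul, hexpL]
    · have hLL : (1 / 2 : ℂ) • (L + Lᴴ) = L := by
        rw [hL.eq, ← two_smul ℂ L, smul_smul]
        norm_num
      rw [hLL]
  · -- lower bound
    rintro r ⟨Q, hQ, X, hX, rfl⟩
    have hφcont : Continuous (Matrix.toEuclideanCLM (𝕜 := ℂ) (n := Fin n)) :=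
      (AddMonoidHomClass.isometry_of_norm (Matrix.toEuclideanCLM (𝕜 := ℂ) (n := Fin n))
        (fun _ => rfl)).continuous
    have hφexp : ∀ M : Matrix (Fin n) (Fin n) ℂ,
        Matrix.toEuclideanCLM (𝕜 := ℂ) (NormedSpace.exp M) =
          NormedSpace.exp (Matrix.toEuclideanCLM (𝕜 := ℂ) M) := fun M =>
      by
        letI : NormedAlgebra ℚ (Matrix (Fin n) (Fin n) ℂ) := NormedAlgebra.restrictScalars ℚ ℂ _
        exact map_exp (Matrix.toEuclideanCLM (𝕜 := ℂ) (n := Fin n)) hφcont M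
    rcases Nat.eq_zero_or_pos n with hn | hn
    · subst hn
      have h0 : Matrix.toEuclideanCLM (𝕜 := ℂ) L = 0 := Subsingleton.elim _ _
      show specNorm L ≤ _
      have h1 : specNorm L = 0 := by
        show ‖Matrix.toEuclideanCLM (𝕜 := ℂ) L‖ = 0
        rw [h0, norm_zero]
      rw [h1]
      exact norm_nonneg _
    haveI : Nonempty (Fin n) := ⟨⟨0, hn⟩⟩
    haveI : Nontrivial (EuclideanSpace ℂ (Fin n)) := inferInstance
    have hQ1 : Qᴴ * Q = 1 := by
      have := (Unitary.mem_iff.mp hQ).1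
      simpa [Matrix.star_eq_conjTranspose] using this
    have hQ2 : Q * Qᴴ = 1 := by
      have := (Unitary.mem_iff.mp hQ).2
      simpa [Matrix.star_eq_conjTranspose] using this
    have hW1 : (Qᴴ * Up)ᴴ * (Qᴴ * Up) = 1 := by
      rw [conjTranspose_mul, conjTranspose_conjTranspose]
      calc Upᴴ * Q * (Qᴴ * Up) = Upᴴ * (Q * Qᴴ) * Up := by noncomm_ring
        _ = 1 := by rw [hQ2, Matrix.mul_one, hUp1]
    have hW2 : (Qᴴ * Up) * (Qᴴ * Up)ᴴ = 1 := by
      rw [conjTranspose_mul, conjTranspose_conjTranspose]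
      calc Qᴴ * Up * (Upᴴ * Q) = Qᴴ * (Up * Upᴴ) * Q := by noncomm_ring
        _ = 1 := by rw [hUp2, Matrix.mul_one, hQ1]
    have hXW : NormedSpace.exp X = (Qᴴ * Up) * NormedSpace.exp L := by
      rw [hX, hpolar, hexpL, Matrix.mul_assoc]
    have hLinv : NormedSpace.exp L * NormedSpace.exp (-L) = 1 := by
      rw [← Matrix.exp_add_of_commute L (-L) ((Commute.refl L).neg_right)]
      rw [add_neg_cancel]
      exact NormedSpace.exp_zero
    have hXinv : NormedSpace.exp (-X) * NormedSpace.exp X = 1 := by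
      rw [← Matrix.exp_add_of_commute (-X) X ((Commute.refl X).neg_left)]
      rw [neg_add_cancel]
      exact NormedSpace.exp_zero
    have hnegX : NormedSpace.exp (-X) = NormedSpace.exp (-L) * (Qᴴ * Up)ᴴ := by
      have h1 : NormedSpace.exp X * (NormedSpace.exp (-L) * (Qᴴ * Up)ᴴ) = 1 := by
        rw [hXW]
        calc (Qᴴ * Up) * NormedSpace.exp L * (NormedSpace.exp (-L) * (Qᴴ * Up)ᴴ)
            = (Qᴴ * Up) * (NormedSpace.exp L * NormedSpace.exp (-L)) * (Qᴴ * Up)ᴴ := by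
              noncomm_ring
          _ = 1 := by rw [hLinv, Matrix.mul_one, hW2]
      calc NormedSpace.exp (-X)
          = NormedSpace.exp (-X) * (NormedSpace.exp X *
              (NormedSpace.exp (-L) * (Qᴴ * Up)ᴴ)) := by rw [h1, Matrix.mul_one]
        _ = (NormedSpace.exp (-X) * NormedSpace.exp X) *
              (NormedSpace.exp (-L) * (Qᴴ * Up)ᴴ) := by noncomm_ring
        _ = NormedSpace.exp (-L) * (Qᴴ * Up)ᴴ := by rw [hXinv, Matrix.one_mul]
    -- operator level : work with the L2 operator norm on matrices directly
    have hnorm_eq : ∀ M : Matrix (Fin n) (Fin n) ℂ, specNorm M = ‖M‖ := fun _ => rfl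
    have hUMul : ∀ (U B : Matrix (Fin n) (Fin n) ℂ), Uᴴ * U = 1 → U * Uᴴ = 1 →
        ‖U * B‖ = ‖B‖ := by
      intro U B h1 h2
      have e1 : star (Matrix.toEuclideanCLM (𝕜 := ℂ) U) * Matrix.toEuclideanCLM (𝕜 := ℂ) U
          = 1 := by
        rw [← StarHomClass.map_star, ← _root_.map_mul, Matrix.star_eq_conjTranspose, h1,
          _root_.map_one]
      have e2 : Matrix.toEuclideanCLM (𝕜 := ℂ) U * star (Matrix.toEuclideanCLM (𝕜 := ℂ) U)
          = 1 := by
        rw [← StarHomClass.map_star, ← _root_.map_mul, Matrix.star_eq_conjTranspose, h2,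
          _root_.map_one]
      show ‖Matrix.toEuclideanCLM (𝕜 := ℂ) (U * B)‖ = ‖Matrix.toEuclideanCLM (𝕜 := ℂ) B‖
      rw [_root_.map_mul]
      exact norm_unitary_mul e1 e2 _
    have hMulU : ∀ (U B : Matrix (Fin n) (Fin n) ℂ), Uᴴ * U = 1 → U * Uᴴ = 1 →
        ‖B * U‖ = ‖B‖ := by
      intro U B h1 h2
      have e1 : star (Matrix.toEuclideanCLM (𝕜 := ℂ) U) * Matrix.toEuclideanCLM (𝕜 := ℂ) U
          = 1 := by
        rw [← StarHomClass.map_star, ← _root_.map_mul, Matrix.star_eq_conjTranspose, h1,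
          _root_.map_one]
      have e2 : Matrix.toEuclideanCLM (𝕜 := ℂ) U * star (Matrix.toEuclideanCLM (𝕜 := ℂ) U)
          = 1 := by
        rw [← StarHomClass.map_star, ← _root_.map_mul, Matrix.star_eq_conjTranspose, h2,
          _root_.map_one]
      show ‖Matrix.toEuclideanCLM (𝕜 := ℂ) (B * U)‖ = ‖Matrix.toEuclideanCLM (𝕜 := ℂ) B‖
      rw [_root_.map_mul]
      exact norm_mul_unitary e1 e2 _
    -- the symmetric part bound, at the matrix level
    have hsymbound : ∀ M : Matrix (Fin n) (Fin n) ℂ,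
        ‖NormedSpace.exp M‖ ≤ Real.exp ‖(1 / 2 : ℂ) • (M + Mᴴ)‖ := by
      intro M
      have h := norm_exp_le_exp_norm_sym (Matrix.toEuclideanCLM (𝕜 := ℂ) M)
      have h2 : (1 / 2 : ℂ) • (Matrix.toEuclideanCLM (𝕜 := ℂ) M +
          star (Matrix.toEuclideanCLM (𝕜 := ℂ) M)) =
          Matrix.toEuclideanCLM (𝕜 := ℂ) ((1 / 2 : ℂ) • (M + Mᴴ)) := by
        rw [_root_.map_smul, _root_.map_add, ← Matrix.star_eq_conjTranspose, StarHomClass.map_star]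
      rw [h2] at h
      calc ‖NormedSpace.exp M‖
          = ‖Matrix.toEuclideanCLM (𝕜 := ℂ) (NormedSpace.exp M)‖ := rfl
        _ = ‖NormedSpace.exp (Matrix.toEuclideanCLM (𝕜 := ℂ) M)‖ := by rw [hφexp]
        _ ≤ Real.exp ‖Matrix.toEuclideanCLM (𝕜 := ℂ) ((1 / 2 : ℂ) • (M + Mᴴ))‖ := h
        _ = Real.exp ‖(1 / 2 : ℂ) • (M + Mᴴ)‖ := rfl
    -- bounds on exp L and exp (-L)
    have hsX : ‖(1 / 2 : ℂ) • (-X + (-X)ᴴ)‖ = ‖(1 / 2 : ℂ) • (X + Xᴴ)‖ := by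
      have h3 : -X + (-X)ᴴ = -(X + Xᴴ) := by
        rw [conjTranspose_neg]; abel
      rw [h3, smul_neg, norm_neg]
    have hL1 : ‖NormedSpace.exp L‖ ≤ Real.exp ‖(1 / 2 : ℂ) • (X + Xᴴ)‖ := by
      have h1 := hsymbound X
      rw [hXW, hUMul (Qᴴ * Up) (NormedSpace.exp L) hW1 hW2] at h1
      exact h1
    have hL2 : ‖NormedSpace.exp (-L)‖ ≤ Real.exp ‖(1 / 2 : ℂ) • (X + Xᴴ)‖ := by
      have h1 := hsymbound (-X)
      rw [hnegX, hsX] at h1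
      have hW1' : ((Qᴴ * Up)ᴴ)ᴴ * (Qᴴ * Up)ᴴ = 1 := by
        rw [conjTranspose_conjTranspose]; exact hW2
      have hW2' : (Qᴴ * Up)ᴴ * ((Qᴴ * Up)ᴴ)ᴴ = 1 := by
        rw [conjTranspose_conjTranspose]; exact hW1
      rw [hMulU ((Qᴴ * Up)ᴴ) (NormedSpace.exp (-L)) hW1' hW2'] at h1
      exact h1
    -- selfadjointness and the spectral bound
    have hTsa : _root_.IsSelfAdjoint (Matrix.toEuclideanCLM (𝕜 := ℂ) L) := by
      have h : star (Matrix.toEuclideanCLM (𝕜 := ℂ) L) = Matrix.toEuclideanCLM (𝕜 := ℂ) L := by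
        rw [← StarHomClass.map_star, Matrix.star_eq_conjTranspose, hL.eq]
      exact h
    have hmax := exp_norm_le_max hTsa
    have hTn1 : ‖NormedSpace.exp (Matrix.toEuclideanCLM (𝕜 := ℂ) L)‖ =
        ‖NormedSpace.exp L‖ := by rw [← hφexp]; rfl
    have hTn2 : ‖NormedSpace.exp (-(Matrix.toEuclideanCLM (𝕜 := ℂ) L))‖ =
        ‖NormedSpace.exp (-L)‖ := by rw [← _root_.map_neg, ← hφexp]; rfl
    rw [hTn1, hTn2] at hmax
    have hfinal : Real.exp ‖Matrix.toEuclideanCLM (𝕜 := ℂ) L‖ ≤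
        Real.exp ‖(1 / 2 : ℂ) • (X + Xᴴ)‖ :=
      hmax.trans (max_le hL1 hL2)
    exact Real.exp_le_exp.mp hfinal
end
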